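/- Let (E_j)_{j≥1} be i.i.d. Exp(1) random variables, b ≥ 2, and τ_n = Σ_{j=1}^n E_j/((b-1)(j-1)+1). Then (b-1)τ_n / log n → 1 almost surely as n → ∞. -/

import Mathlib

open MeasureTheory ProbabilityTheory Filter Finset Real

lemma exp_phi_integrable :
    Integrable (fun x : ℝ => if 0 ≤ x then Real.exp (-x) * x else 0) := by
  have h := Real.GammaIntegral_convergent (s := 2) (by norm_num)
  have h1 : IntegrableOn (fun x : ℝ => Real.exp (-x) * x) (Set.Ioi 0) := by
    refine h.congr_fun (fun x _ => ?_) measurableSet_Ioi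
    norm_num
  have h2 : IntegrableOn (fun x : ℝ => Real.exp (-x) * x) (Set.Ici 0) := by
    rwa [integrableOn_Ici_iff_integrableOn_Ioi]
  have : (fun x : ℝ => if 0 ≤ x then Real.exp (-x) * x else 0)
      = Set.indicator (Set.Ici 0) (fun x : ℝ => Real.exp (-x) * x) := by
    funext x; simp [Set.indicator_apply]
  rw [this, integrable_indicator_iff measurableSet_Ici]
  exact h2

lemma exp_phi_integral :
    ∫ x : ℝ, (if 0 ≤ x then Real.exp (-x) * x else 0) = 1 := by
  have : (fun x : ℝ => if 0 ≤ x then Real.exp (-x) * x else 0)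
      = Set.indicator (Set.Ici 0) (fun x : ℝ => Real.exp (-x) * x) := by
    funext x; simp [Set.indicator_apply]
  rw [this, integral_indicator measurableSet_Ici, MeasureTheory.integral_Ici_eq_integral_Ioi]
  have h := Real.Gamma_eq_integral (s := 2) (by norm_num)
  have h2 : Real.Gamma 2 = 1 := by
    have := Real.Gamma_nat_eq_factorial 1
    norm_num at this
    convert this using 2
    norm_num
  rw [h2] at h
  rw [h]
  apply setIntegral_congr_fun measurableSet_Ioi
  intro x _
  norm_num

lemma expMeasure_eq : expMeasure 1 = MeasureTheory.volume.withDensity (exponentialPDF 1) := rfl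

lemma lintegral_abs_expMeasure :
    ∫⁻ x, ENNReal.ofReal |x| ∂(expMeasure 1) = 1 := by
  have hm : Measurable (exponentialPDF 1) := (measurable_exponentialPDFReal 1).ennreal_ofReal
  rw [expMeasure_eq, lintegral_withDensity_eq_lintegral_mul _ hm measurable_abs.ennreal_ofReal]
  have : ∀ x : ℝ, (exponentialPDF 1 * fun x => ENNReal.ofReal |x|) x
      = ENNReal.ofReal (if 0 ≤ x then Real.exp (-x) * x else 0) := by
    intro x
    simp only [Pi.mul_apply, exponentialPDF_eq]
    rw [← ENNReal.ofReal_mul (by positivity)]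
    congr 1
    by_cases hx : 0 ≤ x
    · simp only [if_pos hx, abs_of_nonneg hx]; ring_nf
    · simp [hx]
  simp_rw [this]
  have hnn : 0 ≤ᵐ[(volume : Measure ℝ)] fun x : ℝ => if 0 ≤ x then Real.exp (-x) * x else 0 := by
    filter_upwards with x
    by_cases hx : 0 ≤ x
    · simp only [if_pos hx, Pi.zero_apply]; positivity
    · simp [hx]
  rw [← ofReal_integral_eq_lintegral_ofReal exp_phi_integrable hnn, exp_phi_integral]
  norm_num

lemma ae_nonneg_expMeasure : ∀ᵐ x ∂(expMeasure 1), 0 ≤ x := by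
  rw [ae_iff]
  have : {x : ℝ | ¬ 0 ≤ x} = Set.Iio 0 := by ext x; simp
  rw [this, expMeasure_eq, withDensity_apply _ measurableSet_Iio]
  exact lintegral_exponentialPDF_of_nonpos le_rfl

lemma integrable_id_expMeasure : Integrable (id : ℝ → ℝ) (expMeasure 1) := by
  refine ⟨aestronglyMeasurable_id, ?_⟩
  rw [hasFiniteIntegral_iff_norm]
  simp_rw [id, Real.norm_eq_abs]
  rw [lintegral_abs_expMeasure]
  norm_num

lemma integral_id_expMeasure : ∫ x, x ∂(expMeasure 1) = 1 := by
  rw [integral_eq_lintegral_of_nonneg_ae ae_nonneg_expMeasure aestronglyMeasurable_id]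
  have : ∫⁻ x, ENNReal.ofReal x ∂(expMeasure 1) = 1 := by
    rw [← lintegral_abs_expMeasure]
    apply lintegral_congr_ae
    filter_upwards [ae_nonneg_expMeasure] with x hx
    rw [abs_of_nonneg hx]
  rw [this]; norm_num



lemma abel_id (x a : ℕ → ℝ) (n : ℕ) :
    ∑ j ∈ Icc 1 n, x j * a j = (∑ j ∈ Icc 1 n, a j)
      + ((∑ j ∈ Icc 1 n, x j) - n) * a n
      + ∑ j ∈ range n, ((∑ i ∈ Icc 1 j, x i) - j) * (a j - a (j + 1)) := by
  induction n with
  | zero => simp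
  | succ n ih =>
    rw [Finset.sum_Icc_succ_top (by omega : 1 ≤ n + 1),
      Finset.sum_Icc_succ_top (by omega : 1 ≤ n + 1) a,
      Finset.sum_Icc_succ_top (by omega : 1 ≤ n + 1) x,
      sum_range_succ, ih]
    push_cast
    ring

lemma sum_inv_sq_le : ∀ n : ℕ, 1 ≤ n → ∑ j ∈ Icc 1 n, ((j : ℝ) * j)⁻¹ ≤ 2 - (n : ℝ)⁻¹ := by
  intro n hn
  induction n, hn using Nat.le_induction with
  | base => norm_num
  | succ n hn ih =>
    rw [Finset.sum_Icc_succ_top (by omega : 1 ≤ n + 1)]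
    have h1 : (0 : ℝ) < n := by exact_mod_cast hn
    have key : (((n : ℝ) + 1) * ((n : ℝ) + 1))⁻¹ ≤ (n : ℝ)⁻¹ - ((n : ℝ) + 1)⁻¹ := by
      have heq : (n:ℝ)⁻¹ - ((n:ℝ)+1)⁻¹ = ((n:ℝ) * ((n:ℝ)+1))⁻¹ := by
        field_simp
        ring
      rw [heq]
      apply inv_anti₀ (by positivity)
      nlinarith
    push_cast
    linarith [ih]

lemma harmonic_cast (n : ℕ) : ((harmonic n : ℝ)) = ∑ j ∈ Icc 1 n, (j : ℝ)⁻¹ := by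
  rw [harmonic_eq_sum_Icc]
  push_cast
  rfl

lemma log_nat_atTop : Tendsto (fun n : ℕ => Real.log n) atTop atTop :=
  Real.tendsto_log_atTop.comp tendsto_natCast_atTop_atTop

lemma harmonic_div_log : Tendsto (fun n : ℕ => (harmonic n : ℝ) / Real.log n) atTop (nhds 1) := by
  have h := Real.tendsto_harmonic_sub_log
  have h2 : Tendsto (fun n : ℕ => ((harmonic n : ℝ) - Real.log n) / Real.log n) atTop (nhds 0) :=
    h.div_atTop log_nat_atTop
  have h3 := h2.add_const 1
  rw [zero_add] at h3
  apply h3.congr'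
  filter_upwards [eventually_ge_atTop 2] with n hn
  have hl : Real.log n ≠ 0 := by
    have h1 : (1:ℝ) < n := by exact_mod_cast (by omega : 1 < n)
    have := Real.log_pos h1
    linarith
  field_simp
  ring

noncomputable def aa (c : ℝ) (j : ℕ) : ℝ := (c * ((j : ℝ) - 1) + 1)⁻¹

lemma den_pos {c : ℝ} (hc : 1 ≤ c) {j : ℕ} (hj : 1 ≤ j) : 0 < c * ((j : ℝ) - 1) + 1 := by
  have h1 : (1 : ℝ) ≤ j := by exact_mod_cast hj
  nlinarith

lemma den_ge {c : ℝ} (hc : 1 ≤ c) {j : ℕ} (hj : 1 ≤ j) : (j : ℝ) ≤ c * ((j : ℝ) - 1) + 1 := by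
  have h1 : (1 : ℝ) ≤ j := by exact_mod_cast hj
  nlinarith

lemma aa_pos {c : ℝ} (hc : 1 ≤ c) {j : ℕ} (hj : 1 ≤ j) : 0 < aa c j :=
  inv_pos.mpr (den_pos hc hj)

lemma aa_le_inv {c : ℝ} (hc : 1 ≤ c) {j : ℕ} (hj : 1 ≤ j) : aa c j ≤ (j : ℝ)⁻¹ := by
  have h1 : (0 : ℝ) < j := by exact_mod_cast hj
  exact inv_anti₀ h1 (den_ge hc hj)

lemma aa_diff_eq {c : ℝ} (hc : 1 ≤ c) {j : ℕ} (hj : 1 ≤ j) :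
    aa c j - aa c (j + 1) = c / ((c * ((j : ℝ) - 1) + 1) * (c * (j : ℝ) + 1)) := by
  have h1 : (0 : ℝ) < c * ((j : ℝ) - 1) + 1 := den_pos hc hj
  have h2 : (0 : ℝ) < c * (j : ℝ) + 1 := by positivity
  have h3 : aa c (j + 1) = (c * (j : ℝ) + 1)⁻¹ := by
    simp only [aa]
    push_cast
    ring_nf
  rw [aa, h3]
  field_simp
  ring

lemma aa_diff_nonneg {c : ℝ} (hc : 1 ≤ c) {j : ℕ} (hj : 1 ≤ j) :
    0 ≤ aa c j - aa c (j + 1) := by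
  rw [aa_diff_eq hc hj]
  have h1 : (0 : ℝ) < c * ((j : ℝ) - 1) + 1 := den_pos hc hj
  have h2 : (0 : ℝ) < c * (j : ℝ) + 1 := by positivity
  positivity

lemma aa_mul_diff_le {c : ℝ} (hc : 1 ≤ c) {j : ℕ} (hj : 1 ≤ j) :
    (j : ℝ) * (aa c j - aa c (j + 1)) ≤ aa c j := by
  rw [aa_diff_eq hc hj, aa]
  have h1 : (0 : ℝ) < c * ((j : ℝ) - 1) + 1 := den_pos hc hj
  have h2 : (0 : ℝ) < c * (j : ℝ) + 1 := by positivity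
  have hj1 : (1 : ℝ) ≤ j := by exact_mod_cast hj
  rw [mul_div_assoc', div_le_iff₀ (by positivity), inv_mul_eq_div,
    mul_comm (c * ((j:ℝ) - 1) + 1), mul_div_assoc, div_self h1.ne', mul_one]
  nlinarith

lemma caa_sub_inv_eq {c : ℝ} (hc : 1 ≤ c) {j : ℕ} (hj : 1 ≤ j) :
    c * aa c j - (j : ℝ)⁻¹ = (c - 1) / ((c * ((j : ℝ) - 1) + 1) * j) := by
  have h1 : (0 : ℝ) < c * ((j : ℝ) - 1) + 1 := den_pos hc hj
  have hj1 : (0 : ℝ) < j := by exact_mod_cast hj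
  rw [aa]
  field_simp
  ring

lemma A_asymp (c : ℝ) (hc : 1 ≤ c) :
    Tendsto (fun n : ℕ => c * (∑ j ∈ Icc 1 n, aa c j) / Real.log n) atTop (nhds 1) := by
  set B : ℕ → ℝ := fun n => ∑ j ∈ Icc 1 n, (c * aa c j - (j : ℝ)⁻¹) with hB
  have hterm_nonneg : ∀ j ∈ Icc 1 (0 + 1), True := fun _ _ => trivial
  have hnn : ∀ j : ℕ, 1 ≤ j → 0 ≤ c * aa c j - (j : ℝ)⁻¹ := by
    intro j hj
    rw [caa_sub_inv_eq hc hj]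
    have h1 : (0 : ℝ) < c * ((j : ℝ) - 1) + 1 := den_pos hc hj
    have hj1 : (0 : ℝ) < j := by exact_mod_cast hj
    have : (0:ℝ) ≤ c - 1 := by linarith
    positivity
  have hub : ∀ j : ℕ, 1 ≤ j → c * aa c j - (j : ℝ)⁻¹ ≤ (c - 1) * ((j : ℝ) * j)⁻¹ := by
    intro j hj
    rw [caa_sub_inv_eq hc hj]
    have h1 : (0 : ℝ) < c * ((j : ℝ) - 1) + 1 := den_pos hc hj
    have hj1 : (0 : ℝ) < j := by exact_mod_cast hj
    rw [← div_eq_mul_inv]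
    apply div_le_div_of_nonneg_left (by linarith) (by positivity)
    nlinarith [den_ge hc hj]
  have hBnn : ∀ n, 0 ≤ B n := fun n =>
    sum_nonneg fun j hj => hnn j (mem_Icc.mp hj).1
  have hBub : ∀ n, B n ≤ (c - 1) * 2 := by
    intro n
    have h1 : B n ≤ ∑ j ∈ Icc 1 n, (c - 1) * ((j : ℝ) * j)⁻¹ :=
      sum_le_sum fun j hj => hub j (mem_Icc.mp hj).1
    rw [← mul_sum] at h1
    rcases Nat.eq_zero_or_pos n with h | h
    · subst h; rw [show B 0 = 0 by simp [hB]]; nlinarith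
    · have h2 := sum_inv_sq_le n h
      have hn0 : (0 : ℝ) < n := by exact_mod_cast h
      have : (0:ℝ) ≤ c - 1 := by linarith
      nlinarith [inv_pos.mpr hn0]
  have hB0 : Tendsto (fun n : ℕ => B n / Real.log n) atTop (nhds 0) := by
    apply tendsto_of_tendsto_of_tendsto_of_le_of_le' (tendsto_const_nhds (x := (0:ℝ)))
      ((tendsto_const_nhds (x := (c-1)*2)).div_atTop log_nat_atTop)
    · filter_upwards [eventually_ge_atTop 2] with n hn
      have hl : 0 < Real.log n := Real.log_pos (by exact_mod_cast (by omega : 1 < n))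
      exact div_nonneg (hBnn n) hl.le
    · filter_upwards [eventually_ge_atTop 2] with n hn
      have hl : 0 < Real.log n := Real.log_pos (by exact_mod_cast (by omega : 1 < n))
      gcongr
      exact hBub n
  have hAB : ∀ n : ℕ, c * (∑ j ∈ Icc 1 n, aa c j) = (harmonic n : ℝ) + B n := by
    intro n
    rw [harmonic_cast, hB, mul_sum, ← sum_add_distrib]
    exact sum_congr rfl fun j hj => by ring
  have hfin := harmonic_div_log.add hB0
  rw [add_zero] at hfin
  apply hfin.congr
  intro n
  rw [hAB n, add_div]

lemma harmonic_atTop : Tendsto (fun n : ℕ => (harmonic n : ℝ)) atTop atTop := by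
  have h := Real.tendsto_harmonic_sub_log.add_atTop log_nat_atTop
  apply h.congr
  intro n
  ring

lemma range_sum_inv_succ (n : ℕ) : ∑ i ∈ range n, ((i : ℝ) + 1)⁻¹ = (harmonic n : ℝ) := by
  rw [harmonic_cast, ← Finset.Ico_add_one_right_eq_Icc, Finset.sum_Ico_eq_sum_range,
    Nat.add_sub_cancel]
  apply sum_congr rfl
  intro i _
  push_cast
  rw [add_comm]

lemma det_lemma (c : ℝ) (hc : 1 ≤ c) (x : ℕ → ℝ)
    (hS : Tendsto (fun n : ℕ => (∑ j ∈ Icc 1 n, x j) / n) atTop (nhds 1)) :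
    Tendsto (fun n : ℕ => c * (∑ j ∈ Icc 1 n, x j / (c * ((j - 1 : ℕ) : ℝ) + 1)) / Real.log n)
      atTop (nhds 1) := by
  set S : ℕ → ℝ := fun n => ∑ j ∈ Icc 1 n, x j with hSdef
  have hε : Tendsto (fun n : ℕ => (S n - n) / n) atTop (nhds 0) := by
    have h1 := hS.sub_const 1
    rw [sub_self] at h1
    apply h1.congr'
    filter_upwards [eventually_ge_atTop 1] with n hn
    have hn0 : (n : ℝ) ≠ 0 := (Nat.cast_pos.mpr hn).ne'
    field_simp
    rfl
  have hgabs : Tendsto (fun n : ℕ => |(S n - n) / n|) atTop (nhds 0) := by simpa using hε.abs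
  have hM : Tendsto (fun n : ℕ => c * ((S n - n) * aa c n) / Real.log n) atTop (nhds 0) := by
    have h1 : Tendsto (fun n : ℕ => (S n - n) * aa c n) atTop (nhds 0) := by
      apply squeeze_zero_norm' _ hgabs
      filter_upwards [eventually_ge_atTop 1] with n hn
      have hn0 : (0 : ℝ) < n := by exact_mod_cast hn
      rw [Real.norm_eq_abs, abs_mul, abs_of_nonneg (aa_pos hc hn).le, abs_div,
        abs_of_nonneg hn0.le]
      calc |S n - n| * aa c n ≤ |S n - n| * (n : ℝ)⁻¹ :=
            mul_le_mul_of_nonneg_left (aa_le_inv hc hn) (abs_nonneg _)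
        _ = |S n - n| / n := by rw [div_eq_mul_inv]
    have h2 : Tendsto (fun n : ℕ => (Real.log n)⁻¹) atTop (nhds 0) :=
      tendsto_inv_atTop_zero.comp log_nat_atTop
    have h3 := (h1.const_mul c).mul h2
    simp only [mul_zero, zero_mul] at h3
    apply h3.congr
    intro n
    rw [div_eq_mul_inv]
  have hT : Tendsto (fun n : ℕ =>
      c * (∑ j ∈ range n, (S j - j) * (aa c j - aa c (j + 1))) / Real.log n) atTop (nhds 0) := by
    have hf : (fun j : ℕ => (S j - j) * (aa c j - aa c (j + 1)))
        =o[atTop] fun j : ℕ => ((j : ℝ) + 1)⁻¹ := by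
      rw [Asymptotics.isLittleO_iff]
      intro C hC
      have h1 : ∀ᶠ j : ℕ in atTop, |(S j - j) / j| < C / 4 :=
        hgabs.eventually (gt_mem_nhds (by positivity))
      filter_upwards [h1, eventually_ge_atTop 1] with j hj1 hj
      have hjr : (1 : ℝ) ≤ j := by exact_mod_cast hj
      have hj0 : (0 : ℝ) < j := by linarith
      have hΔ := aa_diff_nonneg hc hj
      have hjΔ := aa_mul_diff_le hc hj
      have haj := aa_le_inv hc hj
      have heps : |S j - j| ≤ C / 4 * j := by
        have h2 := hj1.le
        rw [abs_div, abs_of_nonneg hj0.le, div_le_iff₀ hj0] at h2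
        linarith
      rw [Real.norm_eq_abs, Real.norm_eq_abs, abs_mul, abs_of_nonneg hΔ,
        abs_of_nonneg (by positivity : (0 : ℝ) ≤ ((j : ℝ) + 1)⁻¹)]
      have h2 : (j : ℝ)⁻¹ ≤ 2 * ((j : ℝ) + 1)⁻¹ := by
        have h3 : (1 : ℝ) / j ≤ 2 / ((j : ℝ) + 1) := by
          rw [div_le_div_iff₀ hj0 (by positivity)]
          linarith
        simpa [one_div, div_eq_mul_inv] using h3
      calc |S j - j| * (aa c j - aa c (j + 1))
          ≤ C / 4 * j * (aa c j - aa c (j + 1)) := mul_le_mul_of_nonneg_right heps hΔ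
        _ = C / 4 * ((j : ℝ) * (aa c j - aa c (j + 1))) := by ring
        _ ≤ C / 4 * aa c j := mul_le_mul_of_nonneg_left hjΔ (by positivity)
        _ ≤ C / 4 * (j : ℝ)⁻¹ := mul_le_mul_of_nonneg_left haj (by positivity)
        _ ≤ C / 4 * (2 * ((j : ℝ) + 1)⁻¹) := mul_le_mul_of_nonneg_left h2 (by positivity)
        _ ≤ C * ((j : ℝ) + 1)⁻¹ := by
            nlinarith [inv_nonneg.mpr (by positivity : (0 : ℝ) ≤ (j : ℝ) + 1)]
    have htop : Tendsto (fun n : ℕ => ∑ i ∈ range n, ((i : ℝ) + 1)⁻¹) atTop atTop := by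
      apply harmonic_atTop.congr
      intro n
      exact (range_sum_inv_succ n).symm
    have hsum := hf.sum_range (fun i => by positivity) htop
    rw [show (fun n : ℕ => ∑ i ∈ range n, ((i : ℝ) + 1)⁻¹)
        = fun n : ℕ => (harmonic n : ℝ) from funext range_sum_inv_succ] at hsum
    have hdiv := hsum.tendsto_div_nhds_zero
    have h4 := hdiv.mul harmonic_div_log
    rw [zero_mul] at h4
    have h5 := h4.const_mul c
    rw [mul_zero] at h5
    apply h5.congr'
    filter_upwards [eventually_ge_atTop 2] with n hn
    have hh : (harmonic n : ℝ) ≠ 0 := by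
      exact_mod_cast (harmonic_pos (by omega : n ≠ 0)).ne'
    have hl : Real.log n ≠ 0 := (Real.log_pos (by exact_mod_cast (by omega : 1 < n))).ne'
    field_simp
  have hA := A_asymp c hc
  have hsum3 := (hA.add hM).add hT
  rw [add_zero, add_zero] at hsum3
  apply hsum3.congr
  intro n
  have hx : ∑ j ∈ Icc 1 n, x j / (c * ((j - 1 : ℕ) : ℝ) + 1)
      = ∑ j ∈ Icc 1 n, x j * aa c j := by
    refine sum_congr rfl fun j hj => ?_
    have h1 : 1 ≤ j := (mem_Icc.mp hj).1
    rw [aa, div_eq_mul_inv, Nat.cast_sub h1, Nat.cast_one]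
  rw [hx, abel_id x (aa c) n]
  ring

/-- `(b-1) τ_n / log n → 1` almost surely, where
`τ_n = Σ_{j=1}^n E_j/((b-1)(j-1)+1)` with `(E_j)` i.i.d. `Exp(1)`. -/
theorem tau_log_asymptotic
    {Ω : Type*} [MeasureSpace Ω] [IsProbabilityMeasure (ℙ : Measure Ω)]
    (b : ℕ) (hb : 2 ≤ b) (E : ℕ → Ω → ℝ)
    (hInd : iIndepFun (m := fun _ => Real.measurableSpace) E ℙ)
    (hExp : ∀ j, Measure.map (E j) ℙ = expMeasure 1) :
    ∀ᵐ ω ∂ℙ, Filter.Tendsto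
      (fun n : ℕ =>
        ((b : ℝ) - 1) * (∑ j ∈ Finset.Icc 1 n, E j ω / (((b : ℝ) - 1) * (j - 1 : ℕ) + 1))
          / Real.log n)
      atTop (nhds 1) := by
  have hc : (1 : ℝ) ≤ (b : ℝ) - 1 := by
    have h2 : (2 : ℝ) ≤ b := by exact_mod_cast hb
    linarith
  have hprob : IsProbabilityMeasure (expMeasure 1) := isProbabilityMeasure_expMeasure one_pos
  have hmeas : ∀ j, AEMeasurable (E j) ℙ := by
    intro j
    by_contra h
    have h0 := Measure.map_of_not_aemeasurable h
    rw [hExp j] at h0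
    exact (IsProbabilityMeasure.ne_zero _) h0
  have hint : Integrable (E 1) ℙ := by
    have h1 : Integrable id (Measure.map (E 1) ℙ) := by
      rw [hExp 1]; exact integrable_id_expMeasure
    have h2 := (integrable_map_measure (by rw [hExp 1]; exact aestronglyMeasurable_id)
      (hmeas 1)).mp h1
    simpa using h2
  have hmean : ∫ ω, E 1 ω ∂ℙ = 1 := by
    have h1 : ∫ ω, E 1 ω ∂ℙ = ∫ y, id y ∂(Measure.map (E 1) ℙ) :=
      (integral_map (hmeas 1) (by rw [hExp 1]; exact aestronglyMeasurable_id)).symm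
    rw [h1, hExp 1]
    simpa using integral_id_expMeasure
  have hident : ∀ i : ℕ, IdentDistrib (E (i + 1)) (E (0 + 1)) ℙ ℙ := fun i =>
    ⟨hmeas _, hmeas _, by rw [hExp, hExp]⟩
  have hindep : Pairwise (Function.onFun (IndepFun · · ℙ) fun i : ℕ => E (i + 1)) :=
    fun i j hij => hInd.indepFun (by omega)
  have hSL := strong_law_ae_real (fun i : ℕ => E (i + 1)) hint hindep hident
  filter_upwards [hSL] with ω hω
  have hω' : Tendsto (fun n : ℕ => (∑ i ∈ range n, E (i + 1) ω) / n) atTop (nhds 1) := by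
    have : (ℙ : Measure Ω)[fun ω => E (0 + 1) ω] = 1 := by
      simpa using hmean
    rwa [this] at hω
  have hS : Tendsto (fun n : ℕ => (∑ j ∈ Icc 1 n, E j ω) / n) atTop (nhds 1) := by
    apply hω'.congr
    intro n
    congr 1
    rw [← Finset.Ico_add_one_right_eq_Icc, Finset.sum_Ico_eq_sum_range, Nat.add_sub_cancel]
    exact sum_congr rfl fun i _ => by rw [add_comm]
  exact det_lemma ((b : ℝ) - 1) hc (fun j => E j ω) hS
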